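/- Every element of a chain semigroup Ŝ is consistent with chain structure; more precisely, every element of Ŝ can be written as a composite â₁⋯â_k of generator lifts, and any such composite is a lift of the product a₁⋯a_k ∈ S that is consistent with chain structure. -/
import Mathlib


namespace Holonomy

variable {X : Type*}

/-- The extended image set `I = {X·s : s ∈ S} ∪ {X} ∪ {{x} : x ∈ X}`,
with the state set taken to be `Set.univ`. -/
def extImgs (S : Set (X → X)) : Set (Set X) :=
  {P : Set X | ∃ s ∈ S, P = s '' (Set.univ : Set X)} ∪ {(Set.univ : Set X)} ∪
    {P : Set X | ∃ x : X, P = {x}}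

/-- `C` is a maximal chain (w.r.t. inclusion) inside the family `I`. -/
def IsMaxChainIn (I : Set (Set X)) (C : Set (Set X)) : Prop :=
  C ⊆ I ∧ IsChain (· ⊆ ·) C ∧
    ∀ D : Set (Set X), D ⊆ I → IsChain (· ⊆ ·) D → C ⊆ D → D = C

/-- `𝒞`, the maximal chains in the extended image set. -/
def MaxChain (S : Set (X → X)) : Type _ :=
  {C : Set (Set X) // IsMaxChainIn (extImgs S) C}

/-- The action of `s` on a chain, `C·s = {P·s : P ∈ C}`. -/
def chainAct (C : Set (Set X)) (s : X → X) : Set (Set X) :=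
  (fun P => s '' P) '' C

/-- Chains `C` and `D` agree down to `P`. -/
def AgreeDownTo (C D : Set (Set X)) (P : Set X) : Prop :=
  P ∈ C ∧ P ∈ D ∧ ∀ Q : Set X, P ⊆ Q → (Q ∈ C ↔ Q ∈ D)

/-- `sh : 𝒞 → 𝒞` is a lift of `s`: `C·s ⊆ sh C` for every maximal chain `C`. -/
def IsLift (S : Set (X → X)) (s : X → X) (sh : MaxChain S → MaxChain S) : Prop :=
  ∀ C : MaxChain S, chainAct C.val s ⊆ (sh C).val

/-- `sh` is consistent with chain structure. -/
def Consistent (S : Set (X → X)) (s : X → X) (sh : MaxChain S → MaxChain S) : Prop :=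
  ∀ (C C' : MaxChain S) (P : Set X),
    AgreeDownTo C.val C'.val P → AgreeDownTo (sh C).val (sh C').val (s '' P)

/-- Product of a list of transformations, in left-to-right (right-action) order:
`prodList [a₁,…,a_k] = a₁⋯a_k`, i.e. `x ↦ a_k (⋯ (a₁ x))`. -/
def prodList {α : Type*} (l : List (α → α)) : α → α :=
  fun x => l.foldl (fun y f => f y) x

/-- Subduction: `P ⊆_S Q` iff `P ⊆ Q·s` for some `s ∈ S¹ = S ∪ {id}`. -/
def Subduction (S : Set (X → X)) (P Q : Set X) : Prop :=
  ∃ s ∈ insert (id : X → X) S, P ⊆ s '' Q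

/-- `P ≡_S Q`. -/
def SubEquiv (S : Set (X → X)) (P Q : Set X) : Prop :=
  Subduction S P Q ∧ Subduction S Q P

/-- Strict subduction `P ⊂_S Q`. -/
def SSubduction (S : Set (X → X)) (P Q : Set X) : Prop :=
  Subduction S P Q ∧ ¬ Subduction S Q P

/-- `P` is not a singleton. -/
def nonSingleton (P : Set X) : Prop := ¬ ∃ x : X, P = {x}

/-- The height of `Q`: the largest length of a strict subduction chain of
non-singleton members of `I` ending at `Q` (`0` for singletons, since then no
such chain exists). -/
noncomputable def height (S : Set (X → X)) (Q : Set X) : ℕ :=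
  sSup {n : ℕ | ∃ l : List (Set X), l.length = n ∧
    (∀ R ∈ l, R ∈ extImgs S ∧ nonSingleton R) ∧
    l.Chain' (SSubduction S) ∧ l.getLast? = some Q}

/-- Depth: `d(Q) = h(X) - h(Q) + 1`. -/
noncomputable def depth (S : Set (X → X)) (Q : Set X) : ℕ :=
  height S (Set.univ : Set X) - height S Q + 1

/-- The tiles of `P`: maximal elements (w.r.t. inclusion) of `{Q ∈ I : Q ⊊ P}`. -/
def tiles (S : Set (X → X)) (P : Set X) : Set (Set X) :=
  {Q | (Q ∈ extImgs S ∧ Q ⊂ P) ∧ ∀ R : Set X, R ∈ extImgs S → R ⊂ P → Q ⊆ R → Q = R}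

/-- The permutator group `G_P` of `P`, as a set of permutations of `P`. -/
def permutator (S : Set (X → X)) (P : Set X) : Set (Equiv.Perm ↥P) :=
  {σ | ∃ s ∈ S, s '' P = P ∧ ∀ p : ↥P, (σ p : X) = s (p : X)}

/-- The holonomy group `H_P` of `P`, as a set of permutations of `tiles P`. -/
def holonomyGroup (S : Set (X → X)) (P : Set X) : Set (Equiv.Perm ↥(tiles S P)) :=
  {σ | ∃ s ∈ S, s '' P = P ∧ ∀ T : ↥(tiles S P), ((σ T : Set X) : Set X) = s '' ((T : Set X) : Set X)}



/-- The state of approximation at level `i` of the positioned chain of a maximal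
chain `C`: `α_1 = X`, and for `i > 1`, `α_i` is the entry of the positioned chain
at the largest filled position `j < i`.  Since position `d(P)` of the positioned
chain of `C : X = P₁ ⊋ ⋯ ⊋ P_k` holds the successor of `P` for each non-minimal
member `P`, `α_i` is the smallest member of `C` whose immediate predecessor in
`C` has depth `< i`. -/
noncomputable def alpha (S : Set (X → X)) (C : Set (Set X)) (i : ℕ) : Set X :=
  if i ≤ 1 then Set.univ
  else ⋂₀ {Q | Q ∈ C ∧ ∀ P : Set X,
    (P ∈ C ∧ Q ⊂ P ∧ ∀ R ∈ C, Q ⊂ R → P ⊆ R) → depth S P < i}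

/-- The chosen equivalence-class representatives of depth `i`. -/
def RepsAt (S : Set (X → X)) (rep : Set X → Set X) (i : ℕ) : Set (Set X) :=
  {R | R ∈ extImgs S ∧ nonSingleton R ∧ rep R = R ∧ depth S R = i}

/-- States of the `i`-th holonomy component `ℋ_i`:
`none` is the extra state `*`, and `some (R, T)` is the tile `T` in the copy of
`tiles(R)` in the disjoint union, for `R` a representative of depth `i`. -/
def ValidAt (S : Set (X → X)) (rep : Set X → Set X) (i : ℕ)
    (t : Option (Set X × Set X)) : Prop :=
  t = none ∨ ∃ R T : Set X, t = some (R, T) ∧ R ∈ RepsAt S rep i ∧ T ∈ tiles S R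

/-- Transformations of the `i`-th holonomy component `ℋ_i` (on its state set):
either a constant map to a state of `ℋ_i`, or an element `(h₁,…,h_k)` of
`H_{R₁} × ⋯ × H_{R_k}` acting on the copy of `tiles(R_j)` by `h_j` (that is, by
`T ↦ T·s` for some `s` stabilizing `R_j`) and fixing `*`. -/
def IsHolTrans (S : Set (X → X)) (rep : Set X → Set X) (i : ℕ)
    (φ : Option (Set X × Set X) → Option (Set X × Set X)) : Prop :=
  (∃ t₀, ValidAt S rep i t₀ ∧ ∀ t, ValidAt S rep i t → φ t = t₀) ∨
  (φ none = none ∧ ∀ R ∈ RepsAt S rep i, ∃ s ∈ S, s '' R = R ∧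
    ∀ T ∈ tiles S R, φ (some (R, T)) = some (R, s '' T))

/-- `F` is an element of the wreath product `ℋ₁ ≀ ⋯ ≀ ℋ_d` of the holonomy
components: the action on each coordinate `i` depends only on the coordinates
above it (through a dependency function), and on every valid state this
component action is a transformation of `ℋ_i`. -/
def IsCascade (S : Set (X → X)) (rep : Set X → Set X) (d : ℕ)
    (F : (Fin d → Option (Set X × Set X)) → (Fin d → Option (Set X × Set X))) : Prop :=
  ∀ i : Fin d, ∃ g : (Fin d → Option (Set X × Set X)) →
      (Option (Set X × Set X) → Option (Set X × Set X)),
    (∀ t, F t i = g t (t i)) ∧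
    (∀ t t', (∀ j : Fin d, j < i → t j = t' j) → g t = g t') ∧
    (∀ t, (∀ j : Fin d, ValidAt S rep (j.val + 1) (t j)) →
      IsHolTrans S rep (i.val + 1) (g t))



/-- The chain semigroup `Ŝ`, generated under composition by the chosen
consistent lifts of the generators `a ∈ A`. -/
def chainSg (S : Set (X → X)) (A : Set (X → X))
    (L : ↥A → MaxChain S → MaxChain S) : Set (MaxChain S → MaxChain S) :=
  (Subsemigroup.closure
    (Set.range (fun a : ↥A => L a) : Set (Function.End (MaxChain S)))).carrier

lemma prodList_cons {α : Type*} (f : α → α) (l : List (α → α)) :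
    prodList (f :: l) = fun x => prodList l (f x) := rfl

lemma prodList_append {α : Type*} (l₁ l₂ : List (α → α)) :
    prodList (l₁ ++ l₂) = fun x => prodList l₂ (prodList l₁ x) := by
  funext x
  simp [prodList, List.foldl_append]

lemma isLift_comp {S : Set (X → X)} {s t : X → X}
    {sh th : MaxChain S → MaxChain S}
    (hs : IsLift S s sh) (ht : IsLift S t th) :
    IsLift S (fun x => t (s x)) (fun C => th (sh C)) := by
  intro C P hP
  obtain ⟨Q, hQ, rfl⟩ := hP
  have h1 : s '' Q ∈ (sh C).val := hs C ⟨Q, hQ, rfl⟩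
  have h2 : t '' (s '' Q) ∈ (th (sh C)).val := ht (sh C) ⟨s '' Q, h1, rfl⟩
  simpa [Set.image_image] using h2

lemma consistent_comp {S : Set (X → X)} {s t : X → X}
    {sh th : MaxChain S → MaxChain S}
    (hs : Consistent S s sh) (ht : Consistent S t th) :
    Consistent S (fun x => t (s x)) (fun C => th (sh C)) := by
  intro C C' P hP
  have h := ht (sh C) (sh C') (s '' P) (hs C C' P hP)
  simpa [Set.image_image] using h

/-- every element of the chain semigroup `Ŝ` is a composite
`â₁⋯â_k` of generator lifts, and any such composite is a lift of the product
`a₁⋯a_k ∈ S` which is consistent with chain structure. -/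
theorem chain_semigroup_elements_consistent {X : Type*} [Fintype X] [Nonempty X]
    (S : Set (X → X)) (hS : ∀ s ∈ S, ∀ t ∈ S, (fun x => t (s x)) ∈ S)
    (A : Set (X → X)) (hA : A ⊆ S)
    (hgen : ∀ s ∈ S, ∃ l : List ↥A, l ≠ [] ∧ s = prodList (l.map Subtype.val))
    (L : ↥A → MaxChain S → MaxChain S)
    (hL : ∀ a : ↥A, IsLift S a.val (L a) ∧ Consistent S a.val (L a)) :
    (∀ F ∈ chainSg S A L,
      ∃ l : List ↥A, l ≠ [] ∧ F = prodList (l.map L)) ∧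
    (∀ l : List ↥A, l ≠ [] →
      IsLift S (prodList (l.map Subtype.val)) (prodList (l.map L)) ∧
      Consistent S (prodList (l.map Subtype.val)) (prodList (l.map L))) := by
  constructor
  · intro F hF
    refine Subsemigroup.closure_induction (p := fun (F : Function.End (MaxChain S)) _ =>
        ∃ l : List ↥A, l ≠ [] ∧ F = prodList (l.map L)) ?_ ?_ hF
    · rintro _ ⟨a, rfl⟩
      exact ⟨[a], by simp, by funext C; rfl⟩
    · rintro F G _ _ ⟨lF, hlF, rfl⟩ ⟨lG, hlG, rfl⟩
      refine ⟨lG ++ lF, by simp [hlG], ?_⟩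
      funext C
      have : (lG ++ lF).map L = lG.map L ++ lF.map L := by simp
      rw [this, prodList_append]
      rfl
  · intro l hl
    induction l with
    | nil => exact absurd rfl hl
    | cons a l ih =>
      rcases eq_or_ne l [] with rfl | hne
      · have h1 : prodList ([a].map Subtype.val) = a.val := by
          funext x; rfl
        have h2 : prodList ([a].map L) = L a := by
          funext C; rfl
        rw [h1, h2]; exact hL a
      · obtain ⟨ihl, ihc⟩ := ih hne
        have e1 : prodList ((a :: l).map Subtype.val)
            = fun x => prodList (l.map Subtype.val) (a.val x) := rfl
        have e2 : prodList ((a :: l).map L)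
            = fun C => prodList (l.map L) (L a C) := rfl
        rw [e1, e2]
        exact ⟨isLift_comp (hL a).1 ihl, consistent_comp (hL a).2 ihc⟩

end Holonomy
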